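/- Lebesgue volume is continuous on convex bodies with respect to the Hausdorff metric: if convex bodies K_j converge to K in the Hausdorff metric, then vol(K_j) → vol(K). -/

import Mathlib

open MeasureTheory Filter

/-- Auxiliary separation lemma: if every point of a closed ball around `x` is within
distance `< r` of a nonempty closed convex set `A`, then `x ∈ A`. -/
lemma aux_mem_of_ball_close {E : Type*} [NormedAddCommGroup E] [InnerProductSpace ℝ E]
    [CompleteSpace E]
    {A : Set E} (hA : Convex ℝ A) (hAc : IsClosed A) (hAne : A.Nonempty) {x : E} {r : ℝ}
    (hr : 0 < r) (h : ∀ y ∈ Metric.closedBall x r, Metric.infDist y A < r) : x ∈ A := by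
  by_contra hx
  obtain ⟨f, u, hfA, hfx⟩ := geometric_hahn_banach_closed_point hA hAc hx
  set v := (InnerProductSpace.toDual ℝ E).symm f with hv
  have hfw : ∀ w, f w = inner ℝ v w := fun w => (InnerProductSpace.toDual_symm_apply).symm
  obtain ⟨a, ha⟩ := hAne
  have hva : v ≠ 0 := by
    intro h0
    have h1 : f a < u := hfA a ha
    have : f a = f x := by rw [hfw, hfw, h0]; simp
    linarith [hfx]
  have hnv : 0 < ‖v‖ := norm_pos_iff.2 hva
  set z := x + (r / ‖v‖) • v with hz
  have hzx : dist z x = r := by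
    rw [hz, dist_eq_norm]
    simp [norm_smul, abs_of_pos (div_pos hr hnv), div_mul_cancel₀, hnv.ne', hr.le]
  have hzball : z ∈ Metric.closedBall x r := by simp [Metric.mem_closedBall, hzx, le_refl]
  obtain ⟨k, hkA, hk⟩ := (Metric.infDist_lt_iff ⟨a, ha⟩).1 (h z hzball)
  have hfz : f z = f x + r * ‖v‖ := by
    rw [hz, map_add, f.map_smul, smul_eq_mul, hfw v, real_inner_self_eq_norm_sq]
    field_simp
  have hbound : f z - f k ≤ ‖f‖ * dist z k := by
    calc f z - f k = f (z - k) := by rw [map_sub]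
    _ ≤ |f (z - k)| := le_abs_self _
    _ ≤ ‖f‖ * ‖z - k‖ := f.le_opNorm _
    _ = ‖f‖ * dist z k := by rw [dist_eq_norm]
  have hnf : ‖f‖ = ‖v‖ := by rw [hv, LinearIsometryEquiv.norm_map]
  have hfk : f k < u := hfA k hkA
  rw [hnf] at hbound
  nlinarith [hfx, hk, mul_le_mul_of_nonneg_left hk.le hnv.le]

/-- Lebesgue volume is continuous on convex bodies for the Hausdorff metric:
if convex bodies `K j` converge to `L` in the Hausdorff metric, then `vol (K j) → vol L`. -/
theorem volume_continuous_on_convex_bodies (n : ℕ)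
    (K : ℕ → ConvexBody (EuclideanSpace ℝ (Fin n)))
    (L : ConvexBody (EuclideanSpace ℝ (Fin n)))
    (hconv : Tendsto K atTop (nhds L)) :
    Tendsto (fun j => (volume (K j : Set (EuclideanSpace ℝ (Fin n)))).toReal) atTop
      (nhds (volume (L : Set (EuclideanSpace ℝ (Fin n)))).toReal) := by
  set E := EuclideanSpace ℝ (Fin n) with hE
  have hdist : ∀ ε > 0, ∀ᶠ j in atTop, dist (K j) L < ε := fun ε hε =>
    eventually_atTop.2 ((Metric.tendsto_atTop.1 hconv ε hε).imp (fun N hN => fun j hj => hN j hj))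
  -- eventual uniform bound
  have hB : ∀ᶠ j in atTop, (K j : Set E) ⊆ Metric.cthickening 1 (L : Set E) := by
    filter_upwards [hdist 1 one_pos] with j hj x hx
    have h1 : Metric.infDist x (L : Set E) ≤ Metric.hausdorffDist (K j : Set E) (L : Set E) :=
      Metric.infDist_le_hausdorffDist_of_mem hx ConvexBody.hausdorffEdist_ne_top
    refine Metric.thickening_subset_cthickening 1 _
      ((Metric.mem_thickening_iff_infDist_lt L.nonempty).2 ?_)
    calc Metric.infDist x (L : Set E) ≤ _ := h1
      _ = dist (K j) L := ConvexBody.hausdorffDist_coe _ _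
      _ < 1 := hj
  -- pointwise a.e. convergence of indicators
  have h_lim : ∀ᵐ x ∂(volume : Measure E),
      ∀ᶠ j in atTop, x ∈ (K j : Set E) ↔ x ∈ (L : Set E) := by
    have hfr : (volume : Measure E) (frontier (L : Set E)) = 0 :=
      L.convex.addHaar_frontier volume
    filter_upwards [measure_eq_zero_iff_ae_notMem.1 hfr] with x hx
    by_cases hxL : x ∈ (L : Set E)
    · -- then x ∈ interior L
      have hxint : x ∈ interior (L : Set E) := by
        by_contra h
        exact hx ⟨subset_closure hxL, h⟩
      obtain ⟨r, hr, hball⟩ := Metric.nhds_basis_closedBall.mem_iff.1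
        (mem_interior_iff_mem_nhds.1 hxint)
      filter_upwards [hdist (r / 2) (by linarith)] with j hj
      refine ⟨fun _ => hxL, fun _ => ?_⟩
      refine aux_mem_of_ball_close (K j).convex (K j).isClosed (K j).nonempty
        (by linarith : (0:ℝ) < r / 2) (fun y hy => ?_)
      have hyL : y ∈ (L : Set E) := hball (Metric.closedBall_subset_closedBall (by linarith) hy)
      have h1 : Metric.infDist y ((K j : Set E)) ≤
          Metric.hausdorffDist (L : Set E) (K j : Set E) :=
        Metric.infDist_le_hausdorffDist_of_mem hyL
          (by rw [EMetric.hausdorffEdist_comm]; exact ConvexBody.hausdorffEdist_ne_top)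
      calc Metric.infDist y ((K j : Set E)) ≤ _ := h1
        _ = dist (K j) L := by rw [Metric.hausdorffDist_comm, ConvexBody.hausdorffDist_coe]
        _ < r / 2 := hj
    · -- x ∉ L : eventually x ∉ K j
      have hd : 0 < Metric.infDist x (L : Set E) :=
        (L.isClosed.notMem_iff_infDist_pos L.nonempty).1 hxL
      filter_upwards [hdist _ hd] with j hj
      refine ⟨fun hxK => absurd ?_ hxL, fun h => absurd h hxL⟩
      exfalso
      have h1 : Metric.infDist x (L : Set E) ≤ Metric.hausdorffDist (K j : Set E) (L : Set E) :=
        Metric.infDist_le_hausdorffDist_of_mem hxK ConvexBody.hausdorffEdist_ne_top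
      rw [ConvexBody.hausdorffDist_coe] at h1
      linarith
  have hBc : IsCompact (Metric.cthickening 1 (L : Set E)) :=
    L.isCompact.cthickening
  have hmain : Tendsto (fun j => volume (K j : Set E)) atTop (nhds (volume (L : Set E))) :=
    tendsto_measure_of_ae_tendsto_indicator atTop L.isClosed.measurableSet
      (fun j => (K j).isClosed.measurableSet)
      Metric.isClosed_cthickening.measurableSet
      hBc.measure_lt_top.ne hB h_lim
  exact (ENNReal.tendsto_toReal L.isCompact.measure_lt_top.ne).comp hmain
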